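/- arXiv:math/0008001 — 6 statements merged into one kernel-verified Lean document; each statement's English description precedes it below -/
import Mathlib

section
/- Let k be a positive integer and let α₁,…,α_{2k} and β₁,…,β_{2k} be real numbers such that αᵢ ≥ βᵢ for i = 1,…,k and αᵢ ≤ βᵢ for i = k+1,…,2k. Then there exist k orthonormal vectors ξ₁,…,ξ_k in ℂ^{2k} such that, letting a and b be the diagonal matrices with diagonals (αᵢ) and (βᵢ), we have ⟨aξᵢ, ξⱼ⟩ = ⟨bξᵢ, ξⱼ⟩ for all 1 ≤ i, j ≤ k, and moreover ⟨aξᵢ, ξⱼ⟩ = 0 whenever i ≠ j. -/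
theorem stmt1 (k : ℕ) (hk : 0 < k) (α β : Fin (2 * k) → ℝ)
    (h1 : ∀ i : Fin (2 * k), (i : ℕ) < k → α i ≥ β i)
    (h2 : ∀ i : Fin (2 * k), k ≤ (i : ℕ) → α i ≤ β i)
    (a b : Matrix (Fin (2 * k)) (Fin (2 * k)) ℂ)
    (ha : a = Matrix.diagonal fun i => (α i : ℂ))
    (hb : b = Matrix.diagonal fun i => (β i : ℂ)) :
    ∃ ξ : Fin k → EuclideanSpace ℂ (Fin (2 * k)),
      Orthonormal ℂ ξ ∧
      (∀ i j : Fin k,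
        (inner ℂ (Matrix.toEuclideanLin a (ξ i)) (ξ j) : ℂ) =
          (inner ℂ (Matrix.toEuclideanLin b (ξ i)) (ξ j) : ℂ)) ∧
      (∀ i j : Fin k, i ≠ j →
        (inner ℂ (Matrix.toEuclideanLin a (ξ i)) (ξ j) : ℂ) = 0) := by
  subst ha hb
  -- index embeddings
  set e₁ : Fin k → Fin (2 * k) := fun i => ⟨i.1, by have := i.2; omega⟩ with he₁
  set e₂ : Fin k → Fin (2 * k) := fun i => ⟨i.1 + k, by have := i.2; omega⟩ with he₂
  set d1 : Fin k → ℝ := fun i => α (e₁ i) - β (e₁ i) with hd1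
  set d2 : Fin k → ℝ := fun i => β (e₂ i) - α (e₂ i) with hd2
  have hd1nn : ∀ i, 0 ≤ d1 i := fun i => by
    have := h1 (e₁ i) (by simpa [he₁] using i.2); simp [hd1]; linarith
  have hd2nn : ∀ i, 0 ≤ d2 i := fun i => by
    have := h2 (e₂ i) (by simp [he₂]); simp [hd2]; linarith
  set t : Fin k → ℝ := fun i => if d1 i + d2 i = 0 then 1/2 else d2 i / (d1 i + d2 i) with hT
  have ht0 : ∀ i, 0 ≤ t i := by
    intro i; simp only [hT]; split
    · norm_num
    · exact div_nonneg (hd2nn i) (by have := hd1nn i; have := hd2nn i; linarith)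
  have ht1 : ∀ i, t i ≤ 1 := by
    intro i; simp only [hT]; split
    · norm_num
    · rename_i h
      have hpos : 0 < d1 i + d2 i :=
        lt_of_le_of_ne (by have := hd1nn i; have := hd2nn i; linarith) (Ne.symm h)
      rw [div_le_one hpos]; have := hd1nn i; linarith
  have hbal : ∀ i, t i * d1 i = (1 - t i) * d2 i := by
    intro i; simp only [hT]; split
    · rename_i h
      have h1' : d1 i = 0 := by have := hd1nn i; have := hd2nn i; linarith
      have h2' : d2 i = 0 := by have := hd1nn i; have := hd2nn i; linarith
      simp [h1', h2']
    · rename_i h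
      field_simp
      ring
  set c₁ : Fin k → ℝ := fun i => Real.sqrt (t i) with hc₁
  set c₂ : Fin k → ℝ := fun i => Real.sqrt (1 - t i) with hc₂
  have hc₁sq : ∀ i, c₁ i * c₁ i = t i := fun i => Real.mul_self_sqrt (ht0 i)
  have hc₂sq : ∀ i, c₂ i * c₂ i = 1 - t i := fun i =>
    Real.mul_self_sqrt (by have := ht1 i; linarith)
  set ξ : Fin k → EuclideanSpace ℂ (Fin (2 * k)) := fun i =>
    (WithLp.equiv 2 _).symm
      (fun m => if m = e₁ i then (c₁ i : ℂ) else if m = e₂ i then (c₂ i : ℂ) else 0) with hξ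
  have hξapp : ∀ i m, ξ i m =
      if m = e₁ i then (c₁ i : ℂ) else if m = e₂ i then (c₂ i : ℂ) else 0 := by
    intro i m; rfl
  -- index distinctness facts
  have hee : ∀ i j : Fin k, e₁ i ≠ e₂ j := by
    intro i j h
    have hi := i.2; have hj := j.2
    have : i.1 = j.1 + k := congrArg Fin.val h
    omega
  have he₁inj : ∀ i j : Fin k, e₁ i = e₁ j → i = j := by
    intro i j h
    have hv : i.1 = j.1 := by simpa [he₁, Fin.ext_iff] using h
    exact Fin.ext hv
  have he₂inj : ∀ i j : Fin k, e₂ i = e₂ j → i = j := by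
    intro i j h
    have : i.1 + k = j.1 + k := congrArg Fin.val h
    exact Fin.ext (by omega)
  -- diagonal action
  have hdiag : ∀ (d : Fin (2 * k) → ℂ) (x : EuclideanSpace ℂ (Fin (2 * k))) (m : Fin (2 * k)),
      (Matrix.toEuclideanLin (Matrix.diagonal d) x) m = d m * x m := by
    intro d x m
    simp [Matrix.toEuclideanLin_apply, Matrix.mulVec_diagonal]
  -- inner product of diagonal action as a sum
  have key : ∀ (d : Fin (2 * k) → ℂ) (i j : Fin k),
      (inner ℂ (Matrix.toEuclideanLin (Matrix.diagonal d) (ξ i)) (ξ j) : ℂ) =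
        ∑ m, (starRingEnd ℂ) (d m * ξ i m) * ξ j m := by
    intro d i j
    rw [PiLp.inner_apply]
    refine Finset.sum_congr rfl fun m _ => ?_
    rw [hdiag]
    simp [RCLike.inner_apply]
    ring
  -- vanishing for i ≠ j
  have hvanish : ∀ (d : Fin (2 * k) → ℂ) (i j : Fin k), i ≠ j →
      (inner ℂ (Matrix.toEuclideanLin (Matrix.diagonal d) (ξ i)) (ξ j) : ℂ) = 0 := by
    intro d i j hij
    rw [key]
    refine Finset.sum_eq_zero fun m _ => ?_
    rw [hξapp, hξapp]
    by_cases h1m : m = e₁ i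
    · subst h1m
      have : ¬(e₁ i = e₁ j) := fun h => hij (he₁inj _ _ h)
      have h2 : ¬(e₁ i = e₂ j) := hee i j
      simp [this, h2]
    · by_cases h2m : m = e₂ i
      · subst h2m
        have h3 : ¬(e₂ i = e₁ j) := fun h => hee j i h.symm
        have h4 : ¬(e₂ i = e₂ j) := fun h => hij (he₂inj _ _ h)
        simp [h3, h4]
      · simp [h1m, h2m]
  -- diagonal inner product for i = j
  have hself : ∀ (r : Fin (2 * k) → ℝ) (i : Fin k),
      (inner ℂ (Matrix.toEuclideanLin (Matrix.diagonal fun m => (r m : ℂ)) (ξ i)) (ξ i) : ℂ) =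
        ((t i * r (e₁ i) + (1 - t i) * r (e₂ i) : ℝ) : ℂ) := by
    intro r i
    rw [key]
    rw [Finset.sum_eq_add_of_mem (e₁ i) (e₂ i) (Finset.mem_univ _) (Finset.mem_univ _)
      (fun h => hee i i h)
      (by
        intro m _ hm
        rw [hξapp]
        simp [hm.1, hm.2])]
    rw [hξapp, hξapp]
    have h12 : ¬(e₂ i = e₁ i) := fun h => hee i i h.symm
    simp only [if_pos rfl, if_neg (hee i i), if_neg h12, map_mul, Complex.conj_ofReal]
    simp only [if_true, Complex.conj_ofReal]
    norm_cast
    linear_combination (r (e₁ i)) * hc₁sq i + (r (e₂ i)) * hc₂sq i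
  refine ⟨ξ, ?_, ?_, ?_⟩
  · rw [orthonormal_iff_ite]
    intro i j
    by_cases hij : i = j
    · subst hij
      simp only [if_pos rfl]
      rw [PiLp.inner_apply]
      rw [Finset.sum_eq_add_of_mem (e₁ i) (e₂ i) (Finset.mem_univ _) (Finset.mem_univ _)
        (fun h => hee i i h)
        (by
          intro m _ hm
          rw [hξapp]
          simp [RCLike.inner_apply, hm.1, hm.2])]
      rw [hξapp, hξapp]
      have h12 : ¬(e₂ i = e₁ i) := fun h => hee i i h.symm
      simp only [if_pos rfl, if_neg (hee i i), if_neg h12, RCLike.inner_apply,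
        Complex.conj_ofReal]
      simp only [if_true, Complex.conj_ofReal]
      norm_cast
      linear_combination hc₁sq i + hc₂sq i
    · simp only [if_neg hij]
      rw [PiLp.inner_apply]
      refine Finset.sum_eq_zero fun m _ => ?_
      rw [hξapp, hξapp]
      by_cases h1m : m = e₁ i
      · subst h1m
        have : ¬(e₁ i = e₁ j) := fun h => hij (he₁inj _ _ h)
        simp [RCLike.inner_apply, this, hee i j]
      · by_cases h2m : m = e₂ i
        · subst h2m
          have h3 : ¬(e₂ i = e₁ j) := fun h => hee j i h.symm
          have h4 : ¬(e₂ i = e₂ j) := fun h => hij (he₂inj _ _ h)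
          simp [RCLike.inner_apply, h3, h4]
        · simp [RCLike.inner_apply, h1m, h2m]
  · intro i j
    by_cases hij : i = j
    · subst hij
      rw [hself α i, hself β i]
      norm_cast
      have := hbal i
      simp only [hd1, hd2] at this
      linarith
    · rw [hvanish _ _ _ hij, hvanish _ _ _ hij]
  · intro i j hij
    exact hvanish _ _ _ hij
end

section
/- If a is a self-adjoint 2k×2k complex matrix, then there exist orthonormal vectors ξ₁,…,ξ_k in ℂ^{2k} and a real number λ such that ⟨aξᵢ, ξⱼ⟩ = λ·δ_{ij} for all 1 ≤ i, j ≤ k; equivalently, the orthogonal projection p onto the span of ξ₁,…,ξ_k satisfies pap = λp. -/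
theorem stmt4 (k : ℕ) (hk : 0 < k) (a : Matrix (Fin (2 * k)) (Fin (2 * k)) ℂ)
    (ha : a.IsHermitian) :
    ∃ ξ : Fin k → EuclideanSpace ℂ (Fin (2 * k)), ∃ lam : ℝ,
      Orthonormal ℂ ξ ∧
      ∀ i j : Fin k,
        (inner ℂ (Matrix.toEuclideanLin a (ξ i)) (ξ j) : ℂ) =
          if i = j then (lam : ℂ) else 0 := by
  classical
  set σ := Tuple.sort ha.eigenvalues with hσ
  set μ : Fin (2 * k) → ℝ := ha.eigenvalues ∘ σ with hμdef
  have hμmono : Monotone μ := Tuple.monotone_sort _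
  set w : Fin (2 * k) → EuclideanSpace ℂ (Fin (2 * k)) := fun i => ha.eigenvectorBasis (σ i)
    with hwdef
  have hw : Orthonormal ℂ w := ha.eigenvectorBasis.orthonormal.comp σ σ.injective
  have haw : ∀ i, Matrix.toEuclideanLin a (w i) = (μ i : ℂ) • w i := by
    intro i
    have h := ha.mulVec_eigenvectorBasis (σ i)
    ext x
    have := congrFun h x
    simpa [Matrix.toEuclideanLin_apply, w, μ] using this
  -- index embeddings
  have h1 : ∀ i : Fin k, (i : ℕ) < 2 * k := fun i => by omega
  have h2 : ∀ i : Fin k, k + (i : ℕ) < 2 * k := fun i => by omega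
  set e1 : Fin k → Fin (2 * k) := fun i => ⟨i, h1 i⟩ with he1
  set e2 : Fin k → Fin (2 * k) := fun i => ⟨k + i, h2 i⟩ with he2
  have he1e2 : ∀ i j : Fin k, e1 i ≠ e2 j := by
    intro i j h
    have := congrArg Fin.val h
    simp [e1, e2] at this
    omega
  have he1inj : ∀ i j : Fin k, e1 i = e1 j ↔ i = j := by
    intro i j
    simp only [e1, Fin.ext_iff]
  have he2inj : ∀ i j : Fin k, e2 i = e2 j ↔ i = j := by
    intro i j
    simp only [e2, Fin.ext_iff]
    omega
  set lam : ℝ := μ ⟨k, by omega⟩ with hlam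
  have hle1 : ∀ i : Fin k, μ (e1 i) ≤ lam := by
    intro i; exact hμmono (show e1 i ≤ ⟨k, by omega⟩ from Fin.mk_le_mk.mpr (by omega))
  have hle2 : ∀ i : Fin k, lam ≤ μ (e2 i) := by
    intro i; exact hμmono (show (⟨k, by omega⟩ : Fin (2*k)) ≤ e2 i from Fin.mk_le_mk.mpr (by omega))
  set t : Fin k → ℝ := fun i =>
    if μ (e1 i) = μ (e2 i) then 1 else (μ (e2 i) - lam) / (μ (e2 i) - μ (e1 i)) with ht
  have ht0 : ∀ i, 0 ≤ t i := by
    intro i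
    by_cases h : μ (e1 i) = μ (e2 i)
    · simp [t, h]
    · have hlt : μ (e1 i) < μ (e2 i) := lt_of_le_of_ne (le_trans (hle1 i) (hle2 i)) h
      simp only [t, if_neg h]
      apply div_nonneg <;> linarith [hle2 i]
  have ht1 : ∀ i, t i ≤ 1 := by
    intro i
    by_cases h : μ (e1 i) = μ (e2 i)
    · simp [t, h]
    · have hlt : μ (e1 i) < μ (e2 i) := lt_of_le_of_ne (le_trans (hle1 i) (hle2 i)) h
      simp only [t, if_neg h]
      rw [div_le_one (by linarith)]
      linarith [hle1 i]
  have hsum : ∀ i, t i * μ (e1 i) + (1 - t i) * μ (e2 i) = lam := by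
    intro i
    by_cases h : μ (e1 i) = μ (e2 i)
    · simp only [t, if_pos h]
      linarith [hle1 i, hle2 i, h.le, h.ge]
    · have hlt : μ (e1 i) < μ (e2 i) := lt_of_le_of_ne (le_trans (hle1 i) (hle2 i)) h
      have hne : μ (e2 i) - μ (e1 i) ≠ 0 := by linarith
      simp only [t, if_neg h]
      field_simp
      ring
  set c : Fin k → ℝ := fun i => Real.sqrt (t i) with hc
  set d : Fin k → ℝ := fun i => Real.sqrt (1 - t i) with hd
  have hc2 : ∀ i, c i * c i = t i := fun i => Real.mul_self_sqrt (ht0 i)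
  have hd2 : ∀ i, d i * d i = 1 - t i := fun i => Real.mul_self_sqrt (by linarith [ht1 i])
  set ξ : Fin k → EuclideanSpace ℂ (Fin (2 * k)) :=
    fun i => (c i : ℂ) • w (e1 i) + (d i : ℂ) • w (e2 i) with hξ
  have hwite := orthonormal_iff_ite.mp hw
  have key : ∀ (c1 c2 d1 d2 : ℝ) (i j : Fin k),
      (inner ℂ ((c1 : ℂ) • w (e1 i) + (c2 : ℂ) • w (e2 i))
        ((d1 : ℂ) • w (e1 j) + (d2 : ℂ) • w (e2 j)) : ℂ) =
      if i = j then ((c1 * d1 + c2 * d2 : ℝ) : ℂ) else 0 := by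
    intro c1 c2 d1 d2 i j
    have hne1 : (e1 i = e2 j) = False := eq_false (he1e2 i j)
    have hne2 : (e2 i = e1 j) = False := eq_false fun h => he1e2 j i h.symm
    simp only [inner_add_left, inner_add_right, inner_smul_left, inner_smul_right, hwite,
      he1inj, he2inj, hne1, hne2, if_false, Complex.conj_ofReal]
    by_cases h : i = j <;> simp [h] <;> push_cast <;> ring
  refine ⟨ξ, lam, ?_, ?_⟩
  · rw [orthonormal_iff_ite]
    intro i j
    rw [hξ, key]
    by_cases h : i = j
    · subst h; simp [hc2, hd2]
    · simp [h]
  · intro i j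
    have haξ : Matrix.toEuclideanLin a (ξ i) =
        ((c i * μ (e1 i) : ℝ) : ℂ) • w (e1 i) + ((d i * μ (e2 i) : ℝ) : ℂ) • w (e2 i) := by
      rw [hξ]
      simp only [map_add, map_smul, haw, smul_smul]
      push_cast
      ring_nf
    rw [haξ, hξ, key]
    by_cases h : i = j
    · subst h
      have : c i * μ (e1 i) * c i + d i * μ (e2 i) * d i = lam := by
        have h' : c i * μ (e1 i) * c i + d i * μ (e2 i) * d i
            = (c i * c i) * μ (e1 i) + (d i * d i) * μ (e2 i) := by ring
        rw [h', hc2, hd2, hsum]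
      simp [this]
    · simp [h]
end

section
/- If a₁,…,a_n are injective bounded operators on an infinite-dimensional Hilbert space H such that each aᵢ is either positive or negative (i.e., aᵢ ≥ 0 or aᵢ ≤ 0 as an operator), and k is a positive integer, then there exist a projection p of rank k and nonzero real numbers t₂,…,t_n such that p a₁ p = t₂ p a₂ p = ⋯ = t_n p a_n p. -/
open scoped ComplexConjugate ComplexOrder
set_option linter.unusedSectionVars false
set_option maxHeartbeats 1000000

noncomputable section

namespace Stmt6Aux

open Matrix

variable {H : Type*} [NormedAddCommGroup H] [InnerProductSpace ℂ H] [CompleteSpace H]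

local notation "⟪" x ", " y "⟫" => @inner ℂ _ _ x y

/-- An operator is "good" if it is injective and positive or negative. -/
def Good (b : H →L[ℂ] H) : Prop :=
  Function.Injective b ∧ (b.IsPositive ∨ (-b).IsPositive)

/-- strict positivity of an injective positive operator -/
lemma strict_pos {b : H →L[ℂ] H} (hb : b.IsPositive) (hbi : Function.Injective b)
    (x : H) (hx : x ≠ 0) : 0 < ⟪x, b x⟫ := by
  have hsymm := ContinuousLinearMap.isSelfAdjoint_iff_isSymmetric.1 hb.isSelfAdjoint
  have h3 : (starRingEnd ℂ) ⟪x, b x⟫ = ⟪x, b x⟫ := by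
    rw [inner_conj_symm]; exact hsymm x x
  have him : ⟪x, b x⟫.im = 0 := Complex.conj_eq_iff_im.1 h3
  have hre : 0 ≤ ⟪x, b x⟫.re := by
    have := hb.inner_nonneg_right x
    exact (Complex.nonneg_iff.1 this).1
  rcases eq_or_lt_of_le hre with heq | hlt
  · -- re = 0 : derive b x = 0, contradiction with injectivity
    exfalso
    have hz : ⟪x, b x⟫ = 0 := Complex.ext heq.symm him
    have hune : b x ≠ 0 := fun h => hx (hbi (by simpa using h))
    have hupos : (0:ℝ) < ‖b x‖ ^ 2 := pow_pos (norm_pos_iff.2 hune) 2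
    have hRnn : 0 ≤ ⟪b x, b (b x)⟫.re := by
      have := hb.inner_nonneg_right (b x)
      exact (Complex.nonneg_iff.1 this).1
    have hnormu : ∀ s : ℝ, 0 ≤ 2 * s * ‖b x‖ ^ 2 + s ^ 2 * ⟪b x, b (b x)⟫.re := by
      intro s
      have h0 := hb.inner_nonneg_right (x + (s : ℂ) • b x)
      replace h0 := (Complex.nonneg_iff.1 h0).1
      have hxy : ⟪x, b (b x)⟫ = ((‖b x‖^2 : ℝ) : ℂ) := by
        have h1 : ⟪x, b (b x)⟫ = ⟪b x, b x⟫ := (hsymm x (b x)).symm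
        rw [h1, inner_self_eq_norm_sq_to_K (𝕜 := ℂ) (b x)]
        norm_cast
      have hyx : ⟪b x, b x⟫ = ((‖b x‖^2 : ℝ) : ℂ) := by
        rw [inner_self_eq_norm_sq_to_K (𝕜 := ℂ) (b x)]
        norm_cast
      have hexp : ⟪x + (s:ℂ) • b x, b (x + (s:ℂ) • b x)⟫
          = (s:ℂ) * ((‖b x‖^2:ℝ):ℂ) + (s:ℂ) * ((‖b x‖^2:ℝ):ℂ)
            + (s:ℂ) * (s:ℂ) * ⟪b x, b (b x)⟫ := by
        rw [_root_.map_add, _root_.map_smul]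
        simp only [inner_add_left, inner_add_right, inner_smul_left, inner_smul_right,
          ContinuousLinearMap.coe_smul', Pi.smul_apply]
        rw [Complex.conj_ofReal, hz, hxy, hyx]
        ring
      rw [hexp] at h0
      have heval : ((s:ℂ) * ((‖b x‖^2:ℝ):ℂ) + (s:ℂ) * ((‖b x‖^2:ℝ):ℂ)
          + (s:ℂ) * (s:ℂ) * ⟪b x, b (b x)⟫).re
          = 2 * s * ‖b x‖ ^ 2 + s ^ 2 * ⟪b x, b (b x)⟫.re := by
        simp only [Complex.add_re, Complex.mul_re, Complex.ofReal_re, Complex.ofReal_im,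
          Complex.mul_im]
        ring
      rw [heval] at h0
      exact h0
    set N := ‖b x‖ ^ 2 with hN
    set R := ⟪b x, b (b x)⟫.re with hR
    have hR1 : (0:ℝ) < R + 1 := by linarith
    have hkey := hnormu (-N / (R + 1))
    have hmul : (2 * (-N / (R + 1)) * N + (-N / (R + 1)) ^ 2 * R) * (R + 1) ^ 2
        = -(N ^ 2 * (R + 2)) := by
      field_simp
      ring
    have hfin : 0 ≤ -(N ^ 2 * (R + 2)) := hmul ▸ mul_nonneg hkey (sq_nonneg _)
    nlinarith [hupos, hRnn]
  · rw [Complex.lt_def]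
    exact ⟨by simpa using hlt, by simp [him]⟩

/-- The Gram matrix of an operator w.r.t. a finite family of vectors. -/
def gram (b : H →L[ℂ] H) {K : ℕ} (e : Fin K → H) : Matrix (Fin K) (Fin K) ℂ :=
  Matrix.of fun r s => ⟪e r, b (e s)⟫

lemma gram_apply (b : H →L[ℂ] H) {K : ℕ} (e : Fin K → H) (r s : Fin K) :
    gram b e r s = ⟪e r, b (e s)⟫ := rfl

lemma gram_expand (b : H →L[ℂ] H) {K : ℕ} (e : Fin K → H) (x y : Fin K → ℂ) :
    ⟪∑ l, y l • e l, b (∑ m, x m • e m)⟫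
      = dotProduct (star y) ((gram b e).mulVec x) := by
  have hmap : b (∑ m, x m • e m) = ∑ m, x m • b (e m) := by
    rw [_root_.map_sum]; exact Finset.sum_congr rfl fun m _ => by rw [_root_.map_smul]
  rw [hmap, sum_inner]
  simp only [dotProduct, Pi.star_apply, Matrix.mulVec, dotProduct]
  refine Finset.sum_congr rfl fun l _ => ?_
  rw [inner_smul_left, inner_sum, Finset.mul_sum, Finset.mul_sum]
  refine Finset.sum_congr rfl fun m _ => ?_
  rw [inner_smul_right, gram_apply, RCLike.star_def]
  ring

lemma inner_combo {K : ℕ} {e : Fin K → H} (he : Orthonormal ℂ e) (x y : Fin K → ℂ) :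
    ⟪∑ l, y l • e l, ∑ m, x m • e m⟫ = dotProduct (star y) x := by
  classical
  rw [sum_inner]
  simp only [dotProduct, Pi.star_apply]
  refine Finset.sum_congr rfl fun l _ => ?_
  rw [inner_smul_left, inner_sum]
  have : ∑ m, ⟪e l, x m • e m⟫ = x l := by
    rw [Finset.sum_eq_single l]
    · rw [inner_smul_right, orthonormal_iff_ite.1 he]; simp
    · intro m _ hm
      rw [inner_smul_right, orthonormal_iff_ite.1 he]
      simp [Ne.symm hm]
    · simp
  rw [this, RCLike.star_def]

/-- linear combination of LI family with nonzero coefficients is nonzero -/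
lemma combo_ne_zero {K : ℕ} {e : Fin K → H} (he : LinearIndependent ℂ e)
    {x : Fin K → ℂ} (hx : x ≠ 0) : (∑ m, x m • e m) ≠ 0 := by
  intro h
  apply hx
  funext m
  exact Fintype.linearIndependent_iff.1 he x h m

lemma gram_posDef {b : H →L[ℂ] H} (hb : b.IsPositive) (hbi : Function.Injective b)
    {K : ℕ} {e : Fin K → H} (he : LinearIndependent ℂ e) : (gram b e).PosDef := by
  rw [Matrix.posDef_iff_dotProduct_mulVec]
  constructor
  · -- Hermitian
    ext r s
    simp only [Matrix.conjTranspose_apply, gram_apply, RCLike.star_def, inner_conj_symm]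
    exact ContinuousLinearMap.isSelfAdjoint_iff_isSymmetric.1 hb.isSelfAdjoint (e r) (e s)
  · intro x hx
    have h1 : dotProduct (star x) ((gram b e).mulVec x)
        = ⟪∑ l, x l • e l, b (∑ m, x m • e m)⟫ := (gram_expand b e x x).symm
    rw [h1]
    exact strict_pos hb hbi _ (combo_ne_zero he hx)

lemma sum_dotProduct' {n : Type*} [Fintype n] {ι : Type*} (s : Finset ι)
    (f : ι → n → ℂ) (w : n → ℂ) :
    dotProduct (∑ j ∈ s, f j) w = ∑ j ∈ s, dotProduct (f j) w := by
  simp only [dotProduct, Finset.sum_apply, Finset.sum_mul]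
  exact Finset.sum_comm

lemma dotProduct_sum' {n : Type*} [Fintype n] {ι : Type*} (s : Finset ι)
    (f : ι → n → ℂ) (w : n → ℂ) :
    dotProduct w (∑ j ∈ s, f j) = ∑ j ∈ s, dotProduct w (f j) := by
  simp only [dotProduct, Finset.sum_apply, Finset.mul_sum]
  exact Finset.sum_comm

lemma mulVec_sum' {n : Type*} [Fintype n] [DecidableEq n] {ι : Type*} (s : Finset ι)
    (M : Matrix n n ℂ) (f : ι → n → ℂ) :
    M.mulVec (∑ j ∈ s, f j) = ∑ j ∈ s, M.mulVec (f j) := by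
  have h := map_sum M.mulVecLin f s
  simpa only [Matrix.mulVecLin_apply] using h

lemma dot_herm_shift {n : Type*} [Fintype n] {S : Matrix n n ℂ} (hS : S.IsHermitian)
    (u w : n → ℂ) :
    dotProduct (star u) (S.mulVec w) = dotProduct (star (S.mulVec u)) w := by
  rw [Matrix.dotProduct_mulVec, Matrix.star_mulVec, hS]

open scoped MatrixOrder in
lemma exists_sqrt_herm {m : Type*} [Fintype m] [DecidableEq m] {B : Matrix m m ℂ}
    (hB : B.PosSemidef) : ∃ S : Matrix m m ℂ, S.IsHermitian ∧ S * S = B :=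
  ⟨CFC.sqrt B, (CFC.sqrt_nonneg B).posSemidef.1, CFC.sqrt_mul_sqrt_self B hB.nonneg⟩

/-- Key finite dimensional lemma. -/
lemma key {k : ℕ} (hk : 0 < k) {A B : Matrix (Fin (2*k)) (Fin (2*k)) ℂ}
    (hA : A.PosDef) (hB : B.PosDef) :
    ∃ (t : ℝ) (y : Fin k → (Fin (2*k) → ℂ)),
      0 < t ∧ (∀ r s, dotProduct (star (y r)) (y s) = if r = s then 1 else 0) ∧
      ∀ s r, dotProduct (star (y r)) ((A - (t:ℂ) • B).mulVec (y s)) = 0 := by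
  classical
  -- square root of B
  obtain ⟨S, hSherm, hSS⟩ := exists_sqrt_herm hB.posSemidef
  have hdetB : B.det ≠ 0 := ne_of_gt hB.det_pos
  have hSdet : IsUnit S.det := by
    rw [isUnit_iff_ne_zero]
    intro h
    apply hdetB
    rw [← hSS, Matrix.det_mul, h, mul_zero]
  have hS1 : S * S⁻¹ = 1 := Matrix.mul_nonsing_inv S hSdet
  have hS1' : S⁻¹ * S = 1 := Matrix.nonsing_inv_mul S hSdet
  have hSiherm : S⁻¹.IsHermitian := hSherm.inv
  -- the matrix C
  set C := S⁻¹ * A * S⁻¹ with hCdef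
  have hCherm : C.IsHermitian := by
    show Cᴴ = C
    rw [hCdef, Matrix.conjTranspose_mul, Matrix.conjTranspose_mul, hSiherm, hA.1,
      Matrix.mul_assoc]
  have hCpd : C.PosDef := by
    refine Matrix.posDef_iff_dotProduct_mulVec.2 ⟨hCherm, fun x hx => ?_⟩
    have hx' : S⁻¹.mulVec x ≠ 0 := by
      intro h
      apply hx
      have h2 : S.mulVec (S⁻¹.mulVec x) = S.mulVec 0 := by rw [h]
      rwa [Matrix.mulVec_mulVec, hS1, Matrix.one_mulVec, Matrix.mulVec_zero] at h2
    have hrw : dotProduct (star x) (C.mulVec x)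
        = dotProduct (star (S⁻¹.mulVec x)) (A.mulVec (S⁻¹.mulVec x)) := by
      rw [hCdef, ← Matrix.mulVec_mulVec, ← Matrix.mulVec_mulVec, dot_herm_shift hSiherm]
    rw [hrw]
    exact hA.dotProduct_mulVec_pos hx'
  -- eigen data
  set ν := hCpd.1.eigenvalues with hνdef
  set v := hCpd.1.eigenvectorBasis with hvdef
  have hν : ∀ i, 0 < ν i := hCpd.eigenvalues_pos
  have hvC : ∀ i, C.mulVec (WithLp.equiv 2 _ (v i)) = ν i • (WithLp.equiv 2 _ (v i)) :=
    hCpd.1.mulVec_eigenvectorBasis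
  set σ := Tuple.sort ν with hσdef
  have hmono : Monotone (ν ∘ σ) := Tuple.monotone_sort ν
  have hkK : k < 2*k := by omega
  set t := ν (σ ⟨k, hkK⟩) with htdef
  have ht : 0 < t := hν _
  -- index pairing
  have hloK : ∀ s : Fin k, (s : ℕ) < 2*k := fun s => by omega
  have hhiK : ∀ s : Fin k, 2*k - 1 - (s:ℕ) < 2*k := fun s => by omega
  set lo : Fin k → Fin (2*k) := fun s => σ ⟨s, hloK s⟩ with hlodef
  set hi : Fin k → Fin (2*k) := fun s => σ ⟨2*k - 1 - s, hhiK s⟩ with hhidef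
  have hlo_le : ∀ s, ν (lo s) ≤ t := by
    intro s
    exact hmono (Fin.mk_le_mk.2 (by omega : (s:ℕ) ≤ k))
  have hhi_ge : ∀ s, t ≤ ν (hi s) := by
    intro s
    have : (s:ℕ) < k := s.2
    exact hmono (Fin.mk_le_mk.2 (by omega : k ≤ 2*k - 1 - (s:ℕ)))
  have hlo_ne_hi : ∀ s r : Fin k, lo s ≠ hi r := by
    intro s r h
    have h2 := Fin.mk.inj_iff.1 (σ.injective h)
    have : (s:ℕ) < k := s.2
    have : (r:ℕ) < k := r.2
    omega
  have hlo_inj : ∀ s r, lo s = lo r → s = r := by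
    intro s r h
    exact Fin.ext (Fin.mk.inj_iff.1 (σ.injective h))
  have hhi_inj : ∀ s r, hi s = hi r → s = r := by
    intro s r h
    have h2 := Fin.mk.inj_iff.1 (σ.injective h)
    have : (s:ℕ) < k := s.2
    have : (r:ℕ) < k := r.2
    apply Fin.ext
    omega
  -- coefficients
  set c : Fin k → ℝ := fun s => if ν (lo s) = ν (hi s) then 1 else Real.sqrt (ν (hi s) - t)
    with hcdef
  set d : Fin k → ℝ := fun s => if ν (lo s) = ν (hi s) then 0 else Real.sqrt (t - ν (lo s))
    with hddef
  have hquad : ∀ s, (c s)^2 * (ν (lo s) - t) + (d s)^2 * (ν (hi s) - t) = 0 := by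
    intro s
    by_cases hdeg : ν (lo s) = ν (hi s)
    · have h1 : ν (lo s) = t := le_antisymm (hlo_le s) (hdeg ▸ hhi_ge s)
      simp only [hcdef, hddef, if_pos hdeg]
      rw [h1]
      ring
    · have h1 : (c s)^2 = ν (hi s) - t := by
        rw [hcdef]; simp only [if_neg hdeg]; exact Real.sq_sqrt (by linarith [hhi_ge s])
      have h2 : (d s)^2 = t - ν (lo s) := by
        rw [hddef]; simp only [if_neg hdeg]; exact Real.sq_sqrt (by linarith [hlo_le s])
      rw [h1, h2]; ring
  have hnorm : ∀ s, 0 < (c s)^2 + (d s)^2 := by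
    intro s
    by_cases hdeg : ν (lo s) = ν (hi s)
    · simp [hcdef, hddef, hdeg]
    · have h1 : (c s)^2 = ν (hi s) - t := by
        rw [hcdef]; simp only [if_neg hdeg]; exact Real.sq_sqrt (by linarith [hhi_ge s])
      have h2 : (d s)^2 = t - ν (lo s) := by
        rw [hddef]; simp only [if_neg hdeg]; exact Real.sq_sqrt (by linarith [hlo_le s])
      have h3 : ν (lo s) < ν (hi s) := lt_of_le_of_ne (le_trans (hlo_le s) (hhi_ge s)) hdeg
      rw [h1, h2]; linarith
  -- the vectors z (plain functions)
  set vv : Fin (2*k) → (Fin (2*k) → ℂ) := fun i => WithLp.equiv 2 _ (v i) with hvvdef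
  have hvop : ∀ r s, dotProduct (star (vv r)) (vv s) = if r = s then 1 else 0 := by
    intro r s
    have h0 := EuclideanSpace.inner_eq_star_dotProduct (v r) (v s)
    have h1 := orthonormal_iff_ite.1 v.orthonormal r s
    rw [h0] at h1
    exact (dotProduct_comm _ _).trans h1
  set z : Fin k → (Fin (2*k) → ℂ) := fun s => ((c s : ℂ)) • vv (lo s) + ((d s : ℂ)) • vv (hi s)
    with hzdef
  set M : Matrix (Fin (2*k)) (Fin (2*k)) ℂ := C - (t:ℂ) • 1 with hMdef
  have hMv : ∀ i, M.mulVec (vv i) = (((ν i - t : ℝ)) : ℂ) • vv i := by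
    intro i
    rw [hMdef, Matrix.sub_mulVec, Matrix.smul_mulVec, Matrix.one_mulVec, hvvdef]
    rw [hvC i, RCLike.real_smul_eq_coe_smul (K := ℂ)]
    push_cast
    rw [sub_smul]
    rfl
  have hMz : ∀ s r, dotProduct (star (z r)) (M.mulVec (z s)) = 0 := by
    intro s r
    rw [hzdef]
    simp only [Matrix.mulVec_add, Matrix.mulVec_smul, hMv, star_add, star_smul,
      add_dotProduct, smul_dotProduct, dotProduct_add,
      dotProduct_smul, hvop, smul_eq_mul, Complex.star_def, Complex.conj_ofReal]
    by_cases hrs : r = s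
    · subst hrs
      simp only [if_pos rfl, if_neg (hlo_ne_hi r r), if_neg (Ne.symm (hlo_ne_hi r r))]
      simp only [if_true, eq_self_iff_true]
      push_cast
      have hcast : (((c r)^2 * (ν (lo r) - t) + (d r)^2 * (ν (hi r) - t) : ℝ) : ℂ) = 0 := by
        rw [hquad r]; norm_num
      push_cast at hcast
      linear_combination hcast
    · have h1 : lo r ≠ lo s := fun h => hrs (hlo_inj _ _ h)
      have h2 : hi r ≠ hi s := fun h => hrs (hhi_inj _ _ h)
      simp only [if_neg h1, if_neg h2, if_neg (Ne.symm (hlo_ne_hi s r)), if_neg (hlo_ne_hi r s)]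
      ring
  have hzdot : ∀ s r, dotProduct (star (z r)) (z s)
      = if r = s then (((c r)^2 + (d r)^2 : ℝ) : ℂ) else 0 := by
    intro s r
    rw [hzdef]
    simp only [star_add, star_smul, add_dotProduct, smul_dotProduct,
      dotProduct_add, dotProduct_smul, hvop, smul_eq_mul, Complex.star_def,
      Complex.conj_ofReal]
    by_cases hrs : r = s
    · subst hrs
      simp only [if_pos rfl, if_neg (hlo_ne_hi r r), if_neg (Ne.symm (hlo_ne_hi r r)),
        if_true, eq_self_iff_true]
      push_cast
      ring
    · have h1 : lo r ≠ lo s := fun h => hrs (hlo_inj _ _ h)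
      have h2 : hi r ≠ hi s := fun h => hrs (hhi_inj _ _ h)
      simp only [if_neg h1, if_neg h2, if_neg (Ne.symm (hlo_ne_hi s r)), if_neg (hlo_ne_hi r s),
        if_neg hrs]
      ring
  -- normalized z
  set nz : Fin k → ℝ := fun s => Real.sqrt ((c s)^2 + (d s)^2) with hnzdef
  have hnzpos : ∀ s, 0 < nz s := fun s => Real.sqrt_pos.2 (hnorm s)
  set w : Fin k → (Fin (2*k) → ℂ) := fun s => ((nz s : ℂ))⁻¹ • z s with hwdef
  have hwdot : ∀ s r, dotProduct (star (w r)) (w s) = if r = s then 1 else 0 := by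
    intro s r
    rw [hwdef]
    simp only [star_smul, smul_dotProduct, dotProduct_smul, hzdot, smul_eq_mul,
      star_inv₀, Complex.star_def, Complex.conj_ofReal]
    by_cases hrs : r = s
    · subst hrs
      simp only [if_pos rfl]
      have hsq : ((nz r : ℂ)) * (nz r : ℂ) = (((c r)^2 + (d r)^2 : ℝ) : ℂ) := by
        rw [hnzdef]
        norm_cast
        exact Real.mul_self_sqrt (le_of_lt (hnorm r))
      have hne : (nz r : ℂ) ≠ 0 := by
        simp only [ne_eq, Complex.ofReal_eq_zero]
        exact ne_of_gt (hnzpos r)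
      field_simp
      rw [if_pos trivial, if_pos trivial, sq (nz r : ℂ), hsq]
      push_cast
      ring
    · simp [hrs]
  have hwM : ∀ s r, dotProduct (star (w r)) (M.mulVec (w s)) = 0 := by
    intro s r
    rw [hwdef]
    simp only [star_smul, smul_dotProduct, Matrix.mulVec_smul, dotProduct_smul,
      hMz, smul_eq_mul, mul_zero]
  -- the vectors x = S⁻¹ w, in EuclideanSpace form
  set x : Fin k → (Fin (2*k) → ℂ) := fun s => S⁻¹.mulVec (w s) with hxdef
  have hSx : ∀ s, S.mulVec (x s) = w s := by
    intro s
    rw [hxdef, Matrix.mulVec_mulVec, hS1, Matrix.one_mulVec]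
  set Leq := WithLp.linearEquiv 2 ℂ (Fin (2*k) → ℂ) with hLeqdef
  set xE : Fin k → EuclideanSpace ℂ (Fin (2*k)) := fun s => Leq.symm (x s) with hxEdef
  have hxLI : LinearIndependent ℂ xE := by
    rw [Fintype.linearIndependent_iff]
    intro g hg r
    have hg' : ∑ i, g i • x i = 0 := by
      have h2 := congrArg Leq hg
      rw [map_sum, map_zero] at h2
      simpa [hxEdef] using h2
    have hgw : ∑ i, g i • w i = 0 := by
      have h2 := congrArg (fun u => S.mulVec u) hg'
      simp only [mulVec_sum', Matrix.mulVec_smul, hSx, Matrix.mulVec_zero] at h2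
      exact h2
    have h3 := congrArg (fun u => dotProduct (star (w r)) u) hgw
    simp only [dotProduct_sum', dotProduct_smul, hwdot, smul_eq_mul,
      dotProduct_zero] at h3
    rw [Finset.sum_eq_single r] at h3
    · simpa using h3
    · intro m _ hm
      simp [Ne.symm hm]
    · simp
  -- orthonormal basis of the span
  set X : Submodule ℂ (EuclideanSpace ℂ (Fin (2*k))) := Submodule.span ℂ (Set.range xE)
    with hXdef
  have hXfd : FiniteDimensional ℂ X := FiniteDimensional.span_of_finite ℂ (Set.finite_range xE)
  have hfr : Module.finrank ℂ X = k := by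
    rw [hXdef, finrank_span_eq_card hxLI, Fintype.card_fin]
  set ONB := (stdOrthonormalBasis ℂ X).reindex (finCongr hfr) with hONBdef
  set y : Fin k → (Fin (2*k) → ℂ) := fun s => Leq ((ONB s : EuclideanSpace ℂ (Fin (2*k))))
    with hydef
  have hyX : ∀ s, (ONB s : EuclideanSpace ℂ (Fin (2*k))) ∈ X := fun s => SetLike.coe_mem _
  have hydot : ∀ r s, dotProduct (star (y r)) (y s) = if r = s then 1 else 0 := by
    intro r s
    have h1 : ⟪(ONB r : EuclideanSpace ℂ (Fin (2*k))), (ONB s : EuclideanSpace ℂ (Fin (2*k)))⟫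
        = if r = s then 1 else 0 := by
      rw [← Submodule.coe_inner]
      exact orthonormal_iff_ite.1 ONB.orthonormal r s
    rw [EuclideanSpace.inner_eq_star_dotProduct] at h1
    exact (dotProduct_comm _ _).trans h1
  -- each S *ᵥ y s is a combination of the w's
  have hSwmem : ∀ s, ∃ g : Fin k → ℂ, S.mulVec (y s) = ∑ i, g i • w i := by
    intro s
    obtain ⟨g, hg⟩ := (Submodule.mem_span_range_iff_exists_fun (R := ℂ)).1 (hyX s)
    refine ⟨g, ?_⟩
    have h2 := congrArg Leq hg
    rw [_root_.map_sum] at h2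
    have h3 : Leq ((ONB s : EuclideanSpace ℂ (Fin (2*k)))) = ∑ i, g i • x i := by
      rw [← h2]
      refine Finset.sum_congr rfl fun i _ => ?_
      rw [_root_.map_smul, hxEdef]
      simp
    simp only [hydef]
    rw [h3, mulVec_sum']
    exact Finset.sum_congr rfl fun i _ => by rw [Matrix.mulVec_smul, hSx]
  -- A - t B = S M S
  have hABSMS : A - (t:ℂ) • B = S * M * S := by
    rw [hMdef, hCdef, Matrix.mul_sub, Matrix.sub_mul]
    congr 1
    · rw [← Matrix.mul_assoc, ← Matrix.mul_assoc, hS1, Matrix.one_mul, Matrix.mul_assoc, hS1',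
        Matrix.mul_one]
    · rw [Matrix.mul_smul, Matrix.smul_mul, Matrix.mul_one, hSS]
  -- conclusion
  refine ⟨t, y, ht, hydot, fun s r => ?_⟩
  rw [hABSMS, ← Matrix.mulVec_mulVec, ← Matrix.mulVec_mulVec, dot_herm_shift hSherm]
  obtain ⟨g, hg⟩ := hSwmem s
  obtain ⟨g', hg'⟩ := hSwmem r
  rw [hg, hg', mulVec_sum']
  rw [dotProduct_sum']
  refine Finset.sum_eq_zero fun i _ => ?_
  rw [star_sum, sum_dotProduct']
  refine Finset.sum_eq_zero fun j _ => ?_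
  rw [Matrix.mulVec_smul, star_smul, smul_dotProduct, dotProduct_smul, hwM]
  simp

/-- Sign wrapper around `key`. -/
lemma key' {k : ℕ} (hk : 0 < k) {A B : Matrix (Fin (2*k)) (Fin (2*k)) ℂ}
    (hA : A.PosDef ∨ (-A).PosDef) (hB : B.PosDef ∨ (-B).PosDef) :
    ∃ (t : ℝ) (y : Fin k → (Fin (2*k) → ℂ)),
      t ≠ 0 ∧ (∀ r s, dotProduct (star (y r)) (y s) = if r = s then 1 else 0) ∧
      ∀ s r, dotProduct (star (y r)) ((A - (t:ℂ) • B).mulVec (y s)) = 0 := by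
  rcases hA with hA | hA <;> rcases hB with hB | hB
  · obtain ⟨t, y, ht, hy, hrel⟩ := key hk hA hB
    exact ⟨t, y, ne_of_gt ht, hy, hrel⟩
  · obtain ⟨t, y, ht, hy, hrel⟩ := key hk hA hB
    refine ⟨-t, y, by simpa using ne_of_gt ht, hy, fun s r => ?_⟩
    have hmat : A - ((-t : ℝ) : ℂ) • B = A - (t:ℂ) • (-B) := by
      push_cast
      module
    rw [hmat]
    exact hrel s r
  · obtain ⟨t, y, ht, hy, hrel⟩ := key hk hA hB
    refine ⟨-t, y, by simpa using ne_of_gt ht, hy, fun s r => ?_⟩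
    have hmat : A - ((-t : ℝ) : ℂ) • B = -(-A - (t:ℂ) • B) := by
      push_cast
      module
    rw [hmat, Matrix.neg_mulVec, dotProduct_neg, hrel s r, neg_zero]
  · obtain ⟨t, y, ht, hy, hrel⟩ := key hk hA hB
    refine ⟨t, y, ne_of_gt ht, hy, fun s r => ?_⟩
    have hmat : A - (t : ℂ) • B = -(-A - (t:ℂ) • (-B)) := by
      module
    rw [hmat, Matrix.neg_mulVec, dotProduct_neg, hrel s r, neg_zero]

/-- orthonormal families of any size exist in an infinite-dimensional Hilbert space -/
lemma exists_orthonormal (hH : ¬FiniteDimensional ℂ H) (K : ℕ) :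
    ∃ e : Fin K → H, Orthonormal ℂ e := by
  have hrank : (K : Cardinal) ≤ Module.rank ℂ H := by
    by_contra h
    push_neg at h
    exact hH (Module.rank_lt_aleph0_iff.1 (lt_trans h (Cardinal.nat_lt_aleph0 K)))
  obtain ⟨f, hf⟩ := exists_linearIndependent_of_le_rank hrank
  have hWfd : FiniteDimensional ℂ (Submodule.span ℂ (Set.range f)) :=
    FiniteDimensional.span_of_finite ℂ (Set.finite_range f)
  have hfr : Module.finrank ℂ (Submodule.span ℂ (Set.range f)) = K := by
    rw [finrank_span_eq_card hf, Fintype.card_fin]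
  set ONB := (stdOrthonormalBasis ℂ (Submodule.span ℂ (Set.range f))).reindex (finCongr hfr)
    with hONBdef
  refine ⟨fun i => (ONB i : H), orthonormal_iff_ite.2 fun i j => ?_⟩
  rw [← Submodule.coe_inner]
  exact orthonormal_iff_ite.1 ONB.orthonormal i j

lemma neg_good {b : H →L[ℂ] H} (hb : Good b) : Good (-b) := by
  refine ⟨fun u w h => hb.1 ?_, ?_⟩
  · have : -(b u) = -(b w) := by simpa using h
    simpa using congrArg Neg.neg this
  · rcases hb.2 with h | h
    · right; simpa using h
    · left; exact h

lemma gram_neg (b : H →L[ℂ] H) {K : ℕ} (e : Fin K → H) : gram (-b) e = -(gram b e) := by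
  ext r s
  simp [gram_apply, inner_neg_right]

lemma good_gram {b : H →L[ℂ] H} (hb : Good b) {K : ℕ} {e : Fin K → H}
    (he : LinearIndependent ℂ e) : (gram b e).PosDef ∨ (-(gram b e)).PosDef := by
  rcases hb.2 with h | h
  · exact Or.inl (gram_posDef h hb.1 he)
  · right
    rw [← gram_neg]
    exact gram_posDef h (neg_good hb).1 he

/-- The main induction. -/
lemma aux (hH : ¬FiniteDimensional ℂ H) (b₀ : H →L[ℂ] H) (h₀ : Good b₀) :
    ∀ (j : ℕ) (b : Fin j → H →L[ℂ] H), (∀ i, Good (b i)) → ∀ (k : ℕ), 0 < k →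
    ∃ (e : Fin k → H) (t : Fin j → ℝ), Orthonormal ℂ e ∧ (∀ i, t i ≠ 0) ∧
      ∀ i s r, ⟪e r, b₀ (e s)⟫ = (t i : ℂ) * ⟪e r, (b i) (e s)⟫ := by
  intro j
  induction j with
  | zero =>
    intro b hb k hk
    obtain ⟨e, he⟩ := exists_orthonormal hH k
    exact ⟨e, Fin.elim0, he, fun i => i.elim0, fun i => i.elim0⟩
  | succ j IH =>
    intro b hb k hk
    obtain ⟨e, t, he, ht, hrel⟩ :=
      IH (fun i => b i.castSucc) (fun i => hb _) (2*k) (by omega)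
    obtain ⟨t', y, ht', hyon, hyrel⟩ :=
      key' hk (good_gram h₀ he.linearIndependent)
        (good_gram (hb (Fin.last j)) he.linearIndependent)
    set e' : Fin k → H := fun s => ∑ m, y s m • e m with he'def
    have he'on : Orthonormal ℂ e' := by
      rw [orthonormal_iff_ite]
      intro i j'
      rw [he'def]
      have := inner_combo he (y j') (y i)
      rw [this, hyon i j']
    have hexp : ∀ (bb : H →L[ℂ] H) (s r : Fin k),
        ⟪e' r, bb (e' s)⟫ = dotProduct (star (y r)) ((gram bb e).mulVec (y s)) := by
      intro bb s r
      rw [he'def]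
      exact gram_expand bb e (y s) (y r)
    refine ⟨e', Fin.lastCases t' t, he'on, fun i => ?_, fun i => ?_⟩
    · refine Fin.lastCases ?_ ?_ i
      · simp only [Fin.lastCases_last]; exact ht'
      · intro i'; simp only [Fin.lastCases_castSucc]; exact ht i'
    · refine Fin.lastCases ?_ ?_ i
      · -- the new relation
        intro s r
        simp only [Fin.lastCases_last]
        rw [hexp, hexp]
        have h0 := hyrel s r
        rw [Matrix.sub_mulVec, Matrix.smul_mulVec, dotProduct_sub,
          dotProduct_smul, sub_eq_zero] at h0
        rw [h0]
        simp
      · -- old relations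
        intro i' s r
        simp only [Fin.lastCases_castSucc]
        rw [hexp, hexp]
        have hgram : gram b₀ e = (t i' : ℂ) • gram (b i'.castSucc) e := by
          ext l m
          rw [Matrix.smul_apply, gram_apply, gram_apply, hrel i' m l]
          simp
        rw [hgram, Matrix.smul_mulVec, dotProduct_smul]
        simp

/-- The projection onto the span of a finite family. -/
def proj {k : ℕ} (e : Fin k → H) : H →L[ℂ] H :=
  ∑ s, (innerSL ℂ (e s)).smulRight (e s)

lemma proj_apply {k : ℕ} (e : Fin k → H) (x : H) :
    proj e x = ∑ s, ⟪e s, x⟫ • e s := by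
  simp [proj, ContinuousLinearMap.sum_apply]

lemma proj_inner {k : ℕ} {e : Fin k → H} (he : Orthonormal ℂ e) (x : H) (r : Fin k) :
    ⟪e r, proj e x⟫ = ⟪e r, x⟫ := by
  rw [proj_apply, inner_sum]
  rw [Finset.sum_eq_single r]
  · rw [inner_smul_right, orthonormal_iff_ite.1 he]; simp
  · intro m _ hm
    rw [inner_smul_right, orthonormal_iff_ite.1 he]
    simp [Ne.symm hm]
  · simp

lemma proj_idem {k : ℕ} {e : Fin k → H} (he : Orthonormal ℂ e) :
    IsIdempotentElem (proj e) := by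
  rw [IsIdempotentElem]
  ext x
  rw [ContinuousLinearMap.mul_apply]
  calc proj e (proj e x) = ∑ r, ⟪e r, proj e x⟫ • e r := proj_apply e (proj e x)
    _ = ∑ r, ⟪e r, x⟫ • e r := Finset.sum_congr rfl fun r _ => by rw [proj_inner he]
    _ = proj e x := (proj_apply e x).symm

lemma proj_sa {k : ℕ} (e : Fin k → H) : IsSelfAdjoint (proj e) := by
  rw [ContinuousLinearMap.isSelfAdjoint_iff_isSymmetric]
  intro x u
  show ⟪proj e x, u⟫ = ⟪x, proj e u⟫
  rw [proj_apply, proj_apply, sum_inner, inner_sum]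
  refine Finset.sum_congr rfl fun s _ => ?_
  rw [inner_smul_left, inner_smul_right, inner_conj_symm]
  ring

lemma proj_range {k : ℕ} {e : Fin k → H} (he : Orthonormal ℂ e) :
    LinearMap.range (proj e : H →ₗ[ℂ] H) = Submodule.span ℂ (Set.range e) := by
  apply le_antisymm
  · rintro u ⟨x, rfl⟩
    rw [ContinuousLinearMap.coe_coe, proj_apply]
    exact Submodule.sum_mem _ fun s _ =>
      Submodule.smul_mem _ _ (Submodule.subset_span (Set.mem_range_self s))
  · rw [Submodule.span_le]
    rintro u ⟨r, rfl⟩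
    refine ⟨e r, ?_⟩
    rw [ContinuousLinearMap.coe_coe, proj_apply, Finset.sum_eq_single r]
    · rw [orthonormal_iff_ite.1 he]; simp
    · intro m _ hm
      rw [orthonormal_iff_ite.1 he]
      simp [hm]
    · simp

lemma proj_conj {k : ℕ} (e : Fin k → H) (b : H →L[ℂ] H) (x : H) :
    (proj e ∘L b ∘L proj e) x = ∑ r, (∑ s, ⟪e s, x⟫ * ⟪e r, b (e s)⟫) • e r := by
  rw [ContinuousLinearMap.comp_apply, ContinuousLinearMap.comp_apply, proj_apply (x := x),
    proj_apply]
  refine Finset.sum_congr rfl fun r _ => ?_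
  congr 1
  rw [_root_.map_sum, inner_sum]
  refine Finset.sum_congr rfl fun s _ => ?_
  rw [_root_.map_smul, inner_smul_right]

end Stmt6Aux

end

section FinalTheorem

local notation "⟪" x ", " y "⟫" => @inner ℂ _ _ x y

theorem stmt6 {H : Type*} [NormedAddCommGroup H] [InnerProductSpace ℂ H]
    [CompleteSpace H] (hH : ¬ FiniteDimensional ℂ H)
    (n : ℕ) (hn : 0 < n) (a : Fin n → H →L[ℂ] H)
    (hinj : ∀ i, Function.Injective (a i))
    (hpn : ∀ i, (a i).IsPositive ∨ (-(a i)).IsPositive)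
    (k : ℕ) (hk : 0 < k) :
    ∃ (p : H →L[ℂ] H) (t : Fin n → ℝ),
      IsIdempotentElem p ∧ IsSelfAdjoint p ∧
      Module.finrank ℂ (LinearMap.range (p : H →ₗ[ℂ] H)) = k ∧
      ∀ i : Fin n, i ≠ ⟨0, hn⟩ →
        t i ≠ 0 ∧ p ∘L a ⟨0, hn⟩ ∘L p = (t i : ℂ) • (p ∘L a i ∘L p) := by
  classical
  have hgood : ∀ i, Stmt6Aux.Good (a i) := fun i => ⟨hinj i, hpn i⟩
  obtain ⟨e, t', he, ht', hrel⟩ := Stmt6Aux.aux hH (a ⟨0, hn⟩) (hgood _) (n-1)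
      (fun i => a ⟨(i:ℕ)+1, by omega⟩) (fun i => hgood _) k hk
  refine ⟨Stmt6Aux.proj e,
    (fun i => if h : (i:ℕ) = 0 then 1 else t' ⟨(i:ℕ)-1, by omega⟩),
    Stmt6Aux.proj_idem he, Stmt6Aux.proj_sa e, ?_, ?_⟩
  · rw [Stmt6Aux.proj_range he, finrank_span_eq_card he.linearIndependent, Fintype.card_fin]
  · intro i hi
    have hne : (i:ℕ) ≠ 0 := fun h => hi (Fin.ext h)
    have hi1 : (i:ℕ) - 1 < n - 1 := by
      have := i.2
      omega
    constructor
    · simp only [dif_neg hne]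
      exact ht' _
    · simp only [dif_neg hne]
      have hb : (⟨((⟨(i:ℕ)-1, hi1⟩ : Fin (n-1)):ℕ)+1, by omega⟩ : Fin n) = i :=
        Fin.ext (by simp; omega)
      ext x
      rw [ContinuousLinearMap.smul_apply, Stmt6Aux.proj_conj, Stmt6Aux.proj_conj,
        Finset.smul_sum]
      refine Finset.sum_congr rfl fun r _ => ?_
      rw [smul_smul]
      congr 1
      rw [Finset.mul_sum]
      refine Finset.sum_congr rfl fun s _ => ?_
      have h2 := hrel ⟨(i:ℕ)-1, hi1⟩ s r
      rw [hb] at h2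
      rw [h2]
      ring

end FinalTheorem
end

section
/- Let S = conv(v₁,…,v_{n+1}) and S′ = conv(v₁′,…,v_{n+1}′) be n-simplices in ℝⁿ, and let ε > 0. If ‖vᵢ − vᵢ′‖ < ε for all i = 1,…,n+1, then S′ contains the ε-interior of S, i.e., every point v such that the closed ε-ball around v is contained in S also lies in S′. -/
open RealInnerProductSpace


theorem stmt13 (n : ℕ) (v v' : Fin (n + 1) → EuclideanSpace ℝ (Fin n))
    (hS : (interior (convexHull ℝ (Set.range v))).Nonempty)
    (hS' : (interior (convexHull ℝ (Set.range v'))).Nonempty)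
    (ε : ℝ) (hε : 0 < ε)
    (hclose : ∀ i, ‖v i - v' i‖ < ε) :
    ∀ x : EuclideanSpace ℝ (Fin n),
      Metric.closedBall x ε ⊆ convexHull ℝ (Set.range v) →
      x ∈ convexHull ℝ (Set.range v') := by
  intro x hx
  by_contra hxc
  have hclosed : IsClosed (convexHull ℝ (Set.range v')) :=
    ((Set.finite_range v').isCompact_convexHull ℝ).isClosed
  obtain ⟨f, u, hfu, hux⟩ :=
    geometric_hahn_banach_closed_point (convex_convexHull ℝ _) hclosed hxc
  have hv'0 : v' 0 ∈ convexHull ℝ (Set.range v') :=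
    subset_convexHull ℝ _ ⟨0, rfl⟩
  have hfne : f ≠ 0 := by
    intro h
    have h1 := hfu _ hv'0
    rw [h] at h1 hux
    simp at h1 hux
    linarith
  have hfpos : 0 < ‖f‖ := norm_pos_iff.mpr hfne
  set z := (InnerProductSpace.toDual ℝ (EuclideanSpace ℝ (Fin n))).symm f with hz
  have hzf : ∀ y, f y = ⟪z, y⟫ := fun y =>
    (InnerProductSpace.toDual_symm_apply).symm
  have hznorm : ‖z‖ = ‖f‖ := LinearIsometryEquiv.norm_map _ f
  have hzne : 0 < ‖z‖ := by rw [hznorm]; exact hfpos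
  set y := x + (ε / ‖z‖) • z with hy
  have hymem : y ∈ convexHull ℝ (Set.range v) := by
    apply hx
    simp only [Metric.mem_closedBall, dist_eq_norm, hy]
    have : x + (ε / ‖z‖) • z - x = (ε / ‖z‖) • z := by abel
    rw [this, norm_smul]
    rw [Real.norm_eq_abs, abs_of_pos (div_pos hε hzne)]
    rw [div_mul_cancel₀ _ (ne_of_gt hzne)]
  -- conv(range v) is contained in the halfspace {p | f p < u + ε * ‖f‖}
  have hH : convexHull ℝ (Set.range v) ⊆ {p | f p < u + ε * ‖f‖} := by
    apply convexHull_min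
    · rintro _ ⟨i, rfl⟩
      have h1 : f (v i) = f (v' i) + f (v i - v' i) := by
        rw [← map_add]; congr 1; abel
      have h2 : f (v i - v' i) ≤ ‖f‖ * ‖v i - v' i‖ :=
        (le_abs_self _).trans (by simpa [Real.norm_eq_abs] using f.le_opNorm (v i - v' i))
      have h3 : ‖f‖ * ‖v i - v' i‖ ≤ ‖f‖ * ε :=
        mul_le_mul_of_nonneg_left (le_of_lt (hclose i)) (le_of_lt hfpos)
      have h4 := hfu _ (subset_convexHull ℝ _ ⟨i, rfl⟩)
      simp only [Set.mem_setOf_eq, h1]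
      nlinarith
    · exact convex_halfSpace_lt (f : EuclideanSpace ℝ (Fin n) →ₗ[ℝ] ℝ).isLinear _
  have hyH := hH hymem
  have hfy : f y = f x + ε * ‖z‖ := by
    rw [hy, map_add, map_smul]
    have : f z = ‖z‖ ^ 2 := by
      rw [hzf z, real_inner_self_eq_norm_sq]
    rw [this]
    field_simp
    congr 1
    rw [smul_eq_mul, sq, ← mul_assoc, div_mul_cancel₀ ε (ne_of_gt hzne)]
  simp only [Set.mem_setOf_eq, hfy, hznorm] at hyH
  linarith
end

section
/- Let a be a bounded self-adjoint operator on an infinite-dimensional Hilbert space H and let b be a compact positive operator on H with dense range. Set a₁ = a and a₂ = a + b. Then there is no orthogonal projection p of infinite rank and real numbers t₁, t₂ such that p a₁ p = t₁ p and p a₂ p = t₂ p. -/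
open scoped InnerProductSpace

set_option maxHeartbeats 1000000
set_option synthInstance.maxHeartbeats 1000000

/-- A positive operator with dense range is injective. -/
lemma aux_inj {H : Type*} [NormedAddCommGroup H] [InnerProductSpace ℂ H]
    [CompleteSpace H] (b : H →L[ℂ] H) (hbpos : b.IsPositive)
    (hbdr : DenseRange ⇑b) {x : H} (hx : b x = 0) : x = 0 := by
  have hsym := (ContinuousLinearMap.isSelfAdjoint_iff_isSymmetric).mp hbpos.isSelfAdjoint
  have hone : ∀ y : H, ⟪b y, x⟫_ℂ = 0 := by
    intro y
    simpa [hx] using hsym y x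
  have hcl : IsClosed {z : H | ⟪z, x⟫_ℂ = 0} :=
    isClosed_eq (continuous_id.inner continuous_const) continuous_const
  have hsub : Set.range ⇑b ⊆ {z : H | ⟪z, x⟫_ℂ = 0} := by
    rintro _ ⟨y, rfl⟩; exact hone y
  have : x ∈ {z : H | ⟪z, x⟫_ℂ = 0} :=
    hcl.closure_subset_iff.mpr hsub (hbdr x)
  exact inner_self_eq_zero.mp this

/-- An idempotent compact operator has finite-dimensional range. -/
lemma aux_fd {H : Type*} [NormedAddCommGroup H] [InnerProductSpace ℂ H]
    [CompleteSpace H] (p : H →L[ℂ] H) (hp2 : IsIdempotentElem p)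
    (hpc : IsCompactOperator ⇑p) : FiniteDimensional ℂ (LinearMap.range (p : H →ₗ[ℂ] H)) := by
  have hfix : ∀ y : H, y ∈ LinearMap.range (p : H →ₗ[ℂ] H) → p y = y := by
    rintro _ ⟨x, rfl⟩
    have := congrArg (fun q : H →L[ℂ] H => q x) hp2
    simpa using this
  have hclosed : IsClosed ((LinearMap.range (p : H →ₗ[ℂ] H) : Submodule ℂ H) : Set H) := by
    have : ((LinearMap.range (p : H →ₗ[ℂ] H) : Submodule ℂ H) : Set H) = {y : H | p y = y} := by
      ext y
      constructor
      · intro hy; exact hfix y hy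
      · intro hy; exact ⟨y, hy⟩
    rw [this]
    exact isClosed_eq p.continuous continuous_id
  obtain ⟨K, hK, hKsub⟩ := hpc.image_closedBall_subset_compact 1
  set S : Set H := ((LinearMap.range (p : H →ₗ[ℂ] H) : Submodule ℂ H) : Set H) ∩ Metric.closedBall 0 1 with hS
  have hSsub : S ⊆ K := by
    rintro y ⟨hy1, hy2⟩
    have : y ∈ ⇑p '' Metric.closedBall 0 1 := ⟨y, hy2, hfix y hy1⟩
    exact hKsub this
  have hSclosed : IsClosed S := hclosed.inter Metric.isClosed_closedBall
  have hScompact : IsCompact S := hK.of_isClosed_subset hSclosed hSsub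
  have hball : (Metric.closedBall (0 : LinearMap.range (p : H →ₗ[ℂ] H)) 1) = Subtype.val ⁻¹' S := by
    ext y
    simp [hS, Metric.mem_closedBall, dist_eq_norm, Submodule.coe_norm, y.2]
  have hcompactball : IsCompact (Metric.closedBall (0 : LinearMap.range (p : H →ₗ[ℂ] H)) 1) := by
    rw [hball]
    exact hclosed.isClosedEmbedding_subtypeVal.isCompact_preimage hScompact
  exact FiniteDimensional.of_isCompact_closedBall ℂ one_pos hcompactball

theorem stmt17 {H : Type*} [NormedAddCommGroup H] [InnerProductSpace ℂ H]
    [CompleteSpace H] (hH : ¬ FiniteDimensional ℂ H)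
    (a b : H →L[ℂ] H) (hsa : IsSelfAdjoint a)
    (hbc : IsCompactOperator (⇑b)) (hbpos : b.IsPositive)
    (hbdr : DenseRange ⇑b) :
    ¬ ∃ (p : H →L[ℂ] H) (t₁ t₂ : ℝ),
        IsIdempotentElem p ∧ IsSelfAdjoint p ∧
        ¬ FiniteDimensional ℂ (LinearMap.range (p : H →ₗ[ℂ] H)) ∧
        p ∘L a ∘L p = (t₁ : ℂ) • p ∧ p ∘L (a + b) ∘L p = (t₂ : ℂ) • p := by
  rintro ⟨p, t₁, t₂, hp2, hpsa, hinf, h1, h2⟩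
  have hpbp : p ∘L b ∘L p = ((t₂ : ℂ) - (t₁ : ℂ)) • p := by
    have hsplit : p ∘L (a + b) ∘L p = p ∘L a ∘L p + p ∘L b ∘L p := by
      rw [ContinuousLinearMap.add_comp, ContinuousLinearMap.comp_add]
    rw [hsplit, h1] at h2
    rw [sub_smul]
    linear_combination (norm := module) h2
  by_cases ht : (t₂ : ℂ) - (t₁ : ℂ) = 0
  · -- p b p = 0 case
    rw [ht, zero_smul] at hpbp
    have h0 : (0 : H →L[ℂ] H) ≤ b := (ContinuousLinearMap.nonneg_iff_isPositive b).mpr hbpos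
    set s := CFC.sqrt b with hsdef
    have hss : s * s = b := CFC.sqrt_mul_sqrt_self b h0
    have hssa : IsSelfAdjoint s := IsSelfAdjoint.of_nonneg (CFC.sqrt_nonneg b)
    have hsp : s * p = 0 := by
      have : star (s * p) * (s * p) = 0 := by
        rw [star_mul, hssa.star_eq, hpsa.star_eq]
        calc p * s * (s * p) = p * (s * s) * p := by noncomm_ring
          _ = p ∘L b ∘L p := by rw [hss]; rfl
          _ = 0 := hpbp
      exact (CStarRing.star_mul_self_eq_zero_iff _).mp this
    have hbp : b * p = 0 := by
      calc b * p = s * (s * p) := by rw [← hss, mul_assoc]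
        _ = 0 := by rw [hsp, mul_zero]
    have hp0 : p = 0 := by
      refine ContinuousLinearMap.ext fun x => ?_
      have hbpx : b (p x) = 0 := by
        have := congrArg (fun q : H →L[ℂ] H => q x) hbp
        simpa using this
      have hx0 := aux_inj b hbpos hbdr hbpx
      simp [hx0]
    apply hinf
    rw [hp0]
    have : LinearMap.range ((0 : H →L[ℂ] H) : H →ₗ[ℂ] H) = (⊥ : Submodule ℂ H) := by
      ext x; simp [eq_comm]
    rw [this]
    infer_instance
  · -- p is compact case
    have hpc : IsCompactOperator ⇑p := by
      have h1c : IsCompactOperator (⇑b ∘ ⇑p) := hbc.comp_clm p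
      have h2c : IsCompactOperator (⇑p ∘ (⇑b ∘ ⇑p)) := h1c.clm_comp p
      have h3c : IsCompactOperator ⇑(p ∘L b ∘L p) := h2c
      rw [hpbp] at h3c
      have h4c : IsCompactOperator (((t₂ : ℂ) - (t₁ : ℂ))⁻¹ • ⇑(((t₂ : ℂ) - (t₁ : ℂ)) • p)) :=
        h3c.smul _
      have : (((t₂ : ℂ) - (t₁ : ℂ))⁻¹ • ⇑(((t₂ : ℂ) - (t₁ : ℂ)) • p)) = ⇑p := by
        funext x
        simp [smul_smul, inv_mul_cancel₀ ht]
      rwa [this] at h4c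
    exact hinf (aux_fd p hp2 hpc)
end

section
/- Let (η_k)_{k=1}^∞ be an orthonormal basis of a Hilbert space H and define the compact self-adjoint operator c by c η_{2n−1} = (1/n) η_{2n−1} and c η_{2n} = −(1/n) η_{2n} for all n ≥ 1. Let ξ_n = (η_{2n−1} + η_{2n})/√2 and let p be the orthogonal projection onto the closed span of {ξ_n : n ≥ 1}. Then p has infinite rank and p c p = 0. -/
theorem stmt19 {H : Type*} [NormedAddCommGroup H] [InnerProductSpace ℂ H]
    [CompleteSpace H]
    (η : ℕ → H) (hη : Orthonormal ℂ η)
    (hbasis : (Submodule.span ℂ (Set.range η)).topologicalClosure = ⊤)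
    (c : H →L[ℂ] H) (hc : IsCompactOperator (⇑c)) (hcsa : IsSelfAdjoint c)
    (hceven : ∀ n : ℕ, c (η (2 * n)) = ((1 : ℂ) / (n + 1)) • η (2 * n))
    (hcodd : ∀ n : ℕ, c (η (2 * n + 1)) = -((1 : ℂ) / (n + 1)) • η (2 * n + 1))
    (ξ : ℕ → H) (hξ : ∀ n : ℕ, ξ n = (Real.sqrt 2)⁻¹ • (η (2 * n) + η (2 * n + 1)))
    (p : H →L[ℂ] H) (hp : IsIdempotentElem p) (hpsa : IsSelfAdjoint p)
    (hrange : LinearMap.range (p : H →ₗ[ℂ] H) =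
      (Submodule.span ℂ (Set.range ξ)).topologicalClosure) :
    ¬ FiniteDimensional ℂ (LinearMap.range (p : H →ₗ[ℂ] H)) ∧ p ∘L c ∘L p = 0 := by
  have hij : ∀ i j, (inner ℂ (η i) (η j) : ℂ) = if i = j then 1 else 0 :=
    orthonormal_iff_ite.mp hη
  have hsmul : ∀ x : H, (Real.sqrt 2)⁻¹ • x = (((Real.sqrt 2)⁻¹ : ℝ) : ℂ) • x := by
    intro x; rw [Complex.coe_smul]
  have h2r : ((Real.sqrt 2)⁻¹ : ℝ) * (Real.sqrt 2)⁻¹ * 2 = 1 := by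
    rw [← mul_inv, Real.mul_self_sqrt (by norm_num)]
    norm_num
  have h2 : (((Real.sqrt 2 : ℝ) : ℂ))⁻¹ * (((Real.sqrt 2 : ℝ) : ℂ))⁻¹ * 2 = 1 := by
    exact_mod_cast h2r
  -- orthonormality of ξ
  have hξon : ∀ m n, (inner ℂ (ξ m) (ξ n) : ℂ) = if m = n then 1 else 0 := by
    intro m n
    rw [hξ, hξ, hsmul, hsmul]
    simp only [inner_smul_left, inner_smul_right, inner_add_left, inner_add_right, hij,
      Complex.conj_ofReal]
    split_ifs <;> try (first | omega | ring)
    all_goals norm_cast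
    all_goals linear_combination h2r
  -- the "anti-diagonal" vectors
  set ζ : ℕ → H := fun n => (((Real.sqrt 2)⁻¹ : ℝ) : ℂ) • (η (2 * n) - η (2 * n + 1)) with hζ
  have hcξ : ∀ n, c (ξ n) = ((1 : ℂ) / (n + 1)) • ζ n := by
    intro n
    rw [hξ, hsmul, map_smul, map_add, hceven, hcodd, hζ]
    module
  -- ζ n is orthogonal to every ξ m
  have hperp : ∀ m n, (inner ℂ (ξ m) (ζ n) : ℂ) = 0 := by
    intro m n
    rw [hξ, hsmul, hζ]
    simp only [inner_smul_left, inner_smul_right, inner_add_left, inner_sub_right, hij,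
      Complex.conj_ofReal]
    split_ifs <;> first
      | omega
      | ring
  -- hence ζ n is orthogonal to the range of p
  have hperp' : ∀ n, ∀ z ∈ LinearMap.range (p : H →ₗ[ℂ] H), (inner ℂ (ζ n) z : ℂ) = 0 := by
    intro n z hz
    rw [hrange] at hz
    have hker : Submodule.span ℂ (Set.range ξ) ≤ LinearMap.ker ((innerSL ℂ (ζ n) : H →L[ℂ] ℂ) : H →ₗ[ℂ] ℂ) := by
      rw [Submodule.span_le]
      rintro _ ⟨m, rfl⟩
      simp only [SetLike.mem_coe, LinearMap.mem_ker, ContinuousLinearMap.coe_coe, innerSL_apply_apply]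
      rw [← inner_conj_symm, hperp m n, map_zero]
    have hle := Submodule.topologicalClosure_minimal _ hker
      (ContinuousLinearMap.isClosed_ker _)
    simpa using hle hz
  -- p kills ζ n
  have hpζ : ∀ n, p (ζ n) = 0 := by
    intro n
    have : (inner ℂ (p (ζ n)) (p (ζ n)) : ℂ) = 0 := by
      have hadj := ContinuousLinearMap.adjoint_inner_left p (p (ζ n)) (ζ n)
      rw [hpsa.adjoint_eq] at hadj
      have hpp : p (p (ζ n)) = p (ζ n) := by
        conv_rhs => rw [← hp]
        rfl
      rw [hadj, hpp]
      exact hperp' n _ (LinearMap.mem_range_self _ _)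
    exact inner_self_eq_zero.mp this
  constructor
  · intro hfin
    have hmem : ∀ n, ξ n ∈ LinearMap.range (p : H →ₗ[ℂ] H) := by
      intro n
      rw [hrange]
      exact Submodule.le_topologicalClosure _ (Submodule.subset_span ⟨n, rfl⟩)
    have hξortho : Orthonormal ℂ ξ := orthonormal_iff_ite.mpr hξon
    have hli : LinearIndependent ℂ (fun n => (⟨ξ n, hmem n⟩ : LinearMap.range (p : H →ₗ[ℂ] H))) :=
      LinearIndependent.of_comp (LinearMap.range (p : H →ₗ[ℂ] H)).subtype hξortho.linearIndependent
    exact Module.Finite.not_linearIndependent_of_infinite _ hli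
  · ext x
    have hpx : p x ∈ LinearMap.range (p : H →ₗ[ℂ] H) := LinearMap.mem_range_self _ _
    rw [hrange] at hpx
    have hker : Submodule.span ℂ (Set.range ξ) ≤ LinearMap.ker ((p ∘L c : H →L[ℂ] H) : H →ₗ[ℂ] H) := by
      rw [Submodule.span_le]
      rintro _ ⟨n, rfl⟩
      simp only [SetLike.mem_coe, LinearMap.mem_ker, ContinuousLinearMap.coe_coe, ContinuousLinearMap.coe_comp',
        Function.comp_apply]
      rw [hcξ, map_smul, hpζ, smul_zero]
    have := Submodule.topologicalClosure_minimal _ hker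
      (ContinuousLinearMap.isClosed_ker _) hpx
    simpa using this
end
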